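/- The maximum diameter of the dual (adjacency) graph among all strongly connected pure (d-1)-dimensional simplicial complexes on n vertices equals the length of the longest induced path in the Johnson graph J(n,d). -/

import Mathlib

open Finset

/-- The adjacency (dual) graph of a pure simplicial complex, given by its set of
facets: two facets are adjacent iff they differ in exactly one element. -/
def adjGraph {V : Type*} [DecidableEq V] (C : Finset (Finset V)) :
    SimpleGraph {X // X ∈ C} where
  Adj X Y := (X.1 \ Y.1).card = 1 ∧ (Y.1 \ X.1).card = 1
  symm := ⟨fun X Y h => ⟨h.2, h.1⟩⟩
  loopless := ⟨fun X h => by simp at h⟩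

/-- `Hs n d` : maximum diameter of the adjacency graph among all strongly
connected pure `(d-1)`-dimensional simplicial complexes on `n` vertices. -/
noncomputable def Hs (n d : ℕ) : ℕ :=
  sSup {δ | ∃ C : Finset (Finset (Fin n)),
    (∀ X ∈ C, X.card = d) ∧ (adjGraph C).Connected ∧ (adjGraph C).diam = δ}

/-- The Johnson graph `J(n,d)`: vertices are the `d`-element subsets of `[n]`,
two of them adjacent iff they intersect in `d-1` elements (differ in one element). -/
def johnsonGraph (n d : ℕ) : SimpleGraph {s : Finset (Fin n) // s.card = d} where
  Adj s t := (s.1 \ t.1).card = 1 ∧ (t.1 \ s.1).card = 1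
  symm := ⟨fun s t h => ⟨h.2, h.1⟩⟩
  loopless := ⟨fun s h => by simp at h⟩

/-- `p : Fin (N+1) → V` is an induced path of length `N` in `G`. -/
def IsInducedPath {V : Type*} (G : SimpleGraph V) {N : ℕ} (p : Fin (N + 1) → V) : Prop :=
  Function.Injective p ∧
    ∀ i j : Fin (N + 1), G.Adj (p i) (p j) ↔ (i.val + 1 = j.val ∨ j.val + 1 = i.val)

open SimpleGraph

lemma dist_getVert_le {V : Type*} {G : SimpleGraph V} (hc : G.Connected) {u v : V}
    (w : G.Walk u v) (k : ℕ) : G.dist u (w.getVert k) ≤ k := by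
  induction w generalizing k with
  | nil => simp [SimpleGraph.Walk.getVert, SimpleGraph.dist_self]
  | @cons a b c h q ih =>
    cases k with
    | zero => simp [SimpleGraph.Walk.getVert_zero]
    | succ k =>
      rw [SimpleGraph.Walk.getVert_cons_succ]
      calc G.dist a (q.getVert k) ≤ G.dist a b + G.dist b (q.getVert k) := hc.dist_triangle
        _ ≤ 1 + k := by
            have h1 : G.dist a b = 1 := SimpleGraph.dist_eq_one_iff_adj.mpr h
            have := ih k
            omega
        _ = k + 1 := by omega

lemma getVert_dist_le {V : Type*} {G : SimpleGraph V} (hc : G.Connected) {u v : V}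
    (w : G.Walk u v) (k : ℕ) : G.dist (w.getVert k) v ≤ w.length - k := by
  induction w generalizing k with
  | nil => simp [SimpleGraph.Walk.getVert, SimpleGraph.dist_self]
  | @cons a b c h q ih =>
    cases k with
    | zero =>
      simp only [SimpleGraph.Walk.getVert_zero, SimpleGraph.Walk.length_cons, Nat.sub_zero]
      calc G.dist a c ≤ G.dist a b + G.dist b c := hc.dist_triangle
        _ ≤ q.length + 1 := by
            have h1 : G.dist a b = 1 := SimpleGraph.dist_eq_one_iff_adj.mpr h
            have h2 : G.dist b c ≤ q.length := SimpleGraph.dist_le q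
            omega
    | succ k =>
      rw [SimpleGraph.Walk.getVert_cons_succ]
      simpa using ih k

lemma abs_sub_le_walk_length {V : Type*} {G : SimpleGraph V} (f : V → ℤ)
    (hf : ∀ x y, G.Adj x y → |f x - f y| ≤ 1) {u v : V} (w : G.Walk u v) :
    |f u - f v| ≤ w.length := by
  induction w with
  | nil => simp
  | @cons a b c h q ih =>
    calc |f a - f c| ≤ |f a - f b| + |f b - f c| := abs_sub_le _ _ _
      _ ≤ 1 + q.length := add_le_add (hf a b h) ih
      _ = ((Walk.cons h q).length : ℤ) := by push_cast [SimpleGraph.Walk.length_cons]; ring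

lemma exists_walk_consec {V : Type*} {G : SimpleGraph V} {N : ℕ} (q : Fin (N+1) → V)
    (h : ∀ i : ℕ, (hi : i < N) → G.Adj (q ⟨i, by omega⟩) (q ⟨i+1, by omega⟩)) :
    ∀ (k i : ℕ) (hik : i + k ≤ N),
      ∃ w : G.Walk (q ⟨i, by omega⟩) (q ⟨i+k, by omega⟩), w.length = k := by
  intro k
  induction k with
  | zero => intro i hik; exact ⟨Walk.nil, rfl⟩
  | succ k ih =>
    intro i hik
    obtain ⟨w, hw⟩ := ih i (by omega)
    refine ⟨w.concat (h (i+k) (by omega)), ?_⟩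
    rw [Walk.length_concat, hw]

-- direction: induced path → complex
section
variable (n d : ℕ)

lemma dir_path_to_complex {N : ℕ} (p : Fin (N + 1) → {s : Finset (Fin n) // s.card = d})
    (hp : IsInducedPath (johnsonGraph n d) p) :
    ∃ C : Finset (Finset (Fin n)),
      (∀ X ∈ C, X.card = d) ∧ (adjGraph C).Connected ∧ (adjGraph C).diam = N := by
  classical
  set C : Finset (Finset (Fin n)) := Finset.image (fun i => (p i).1) Finset.univ with hC
  have hmem : ∀ i, (p i).1 ∈ C := fun i => Finset.mem_image.mpr ⟨i, Finset.mem_univ i, rfl⟩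
  set φ : Fin (N+1) → {X // X ∈ C} := fun i => ⟨(p i).1, hmem i⟩ with hφ
  have hφinj : Function.Injective φ := by
    intro i j hij
    have h2 := congrArg Subtype.val hij
    apply hp.1
    apply Subtype.ext
    exact h2
  have hsurj : ∀ X : {X // X ∈ C}, ∃ i, φ i = X := by
    intro X
    obtain ⟨i, -, hi⟩ := Finset.mem_image.mp X.2
    exact ⟨i, Subtype.ext hi⟩
  have hadj : ∀ i j, (adjGraph C).Adj (φ i) (φ j) ↔ ((i:ℕ) + 1 = j ∨ (j:ℕ) + 1 = i) := by
    intro i j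
    exact (hp.2 i j)
  have hconsec : ∀ i : ℕ, (hi : i < N) → (adjGraph C).Adj (φ ⟨i, by omega⟩) (φ ⟨i+1, by omega⟩) :=
    fun i hi => (hadj _ _).mpr (Or.inl rfl)
  have hreach : ∀ i j : Fin (N+1), (adjGraph C).Reachable (φ i) (φ j) := by
    intro i j
    rcases le_total (i:ℕ) (j:ℕ) with hle | hle
    · obtain ⟨w, -⟩ := exists_walk_consec φ hconsec ((j:ℕ) - i) i (by omega)
      have : (⟨(i:ℕ) + ((j:ℕ) - (i:ℕ)), by omega⟩ : Fin (N+1)) = j := by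
        apply Fin.ext; simp; omega
      have hi : (⟨(i:ℕ), by omega⟩ : Fin (N+1)) = i := by apply Fin.ext; simp
      have hr := w.reachable
      rw [this, hi] at hr
      exact hr
    · obtain ⟨w, -⟩ := exists_walk_consec φ hconsec ((i:ℕ) - j) j (by omega)
      have : (⟨(j:ℕ) + ((i:ℕ) - (j:ℕ)), by omega⟩ : Fin (N+1)) = i := by
        apply Fin.ext; simp; omega
      have hj : (⟨(j:ℕ), by omega⟩ : Fin (N+1)) = j := by apply Fin.ext; simp
      have hr := w.reachable
      rw [this, hj] at hr
      exact hr.symm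
  have hconn : (adjGraph C).Connected := by
    rw [SimpleGraph.connected_iff]
    refine ⟨?_, ⟨φ 0⟩⟩
    intro X Y
    obtain ⟨i, rfl⟩ := hsurj X
    obtain ⟨j, rfl⟩ := hsurj Y
    exact hreach i j
  have hdistle : ∀ i j : Fin (N+1), (i:ℕ) ≤ j →
      (adjGraph C).dist (φ i) (φ j) ≤ (j:ℕ) - (i:ℕ) := by
    intro i j hle
    obtain ⟨w, hw⟩ := exists_walk_consec φ hconsec ((j:ℕ) - i) i (by omega)
    have h1 : (⟨(i:ℕ) + ((j:ℕ) - (i:ℕ)), by omega⟩ : Fin (N+1)) = j := by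
      apply Fin.ext; simp; omega
    have h2 : (⟨(i:ℕ), by omega⟩ : Fin (N+1)) = i := by apply Fin.ext; simp
    have hdl := SimpleGraph.dist_le w
    rw [hw, h1, h2] at hdl
    exact hdl
  haveI : Nonempty {X // X ∈ C} := ⟨φ 0⟩
  have hne : (adjGraph C).ediam ≠ ⊤ := by
    obtain ⟨u, v, huv⟩ := SimpleGraph.exists_edist_eq_ediam_of_finite (G := adjGraph C)
    rw [← huv]
    exact SimpleGraph.edist_ne_top_iff_reachable.mpr (hconn.preconnected u v)
  -- lower bound
  set f : {X // X ∈ C} → ℤ := fun X => ((Function.invFun φ X : Fin (N+1)) : ℕ) with hf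
  have hfφ : ∀ i, f (φ i) = (i : ℕ) := by
    intro i
    simp only [hf]
    rw [Function.leftInverse_invFun hφinj i]
  have hflip : ∀ X Y, (adjGraph C).Adj X Y → |f X - f Y| ≤ 1 := by
    intro X Y hXY
    obtain ⟨i, rfl⟩ := hsurj X
    obtain ⟨j, rfl⟩ := hsurj Y
    rw [hfφ, hfφ]
    rcases (hadj i j).mp hXY with h | h <;> [skip; skip] <;> rw [abs_le] <;> omega
  have hNle : N ≤ (adjGraph C).dist (φ 0) (φ ⟨N, by omega⟩) := by
    obtain ⟨w, hw⟩ := hconn.exists_walk_length_eq_dist (φ 0) (φ ⟨N, by omega⟩)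
    have h0 := abs_sub_le_walk_length f hflip w
    rw [hw, hfφ, hfφ] at h0
    simp only [Fin.val_zero, Nat.cast_zero, zero_sub, abs_neg, Nat.abs_cast] at h0
    exact_mod_cast h0
  refine ⟨C, ?_, hconn, ?_⟩
  · intro X hX
    obtain ⟨i, -, rfl⟩ := Finset.mem_image.mp hX
    exact (p i).2
  · apply le_antisymm
    · obtain ⟨u, v, huv⟩ := SimpleGraph.exists_dist_eq_diam (G := adjGraph C)
      rw [← huv]
      obtain ⟨i, rfl⟩ := hsurj u
      obtain ⟨j, rfl⟩ := hsurj v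
      rcases le_total (i:ℕ) (j:ℕ) with hle | hle
      · exact (hdistle i j hle).trans (by omega)
      · rw [SimpleGraph.dist_comm]
        exact (hdistle j i hle).trans (by omega)
    · exact hNle.trans (SimpleGraph.dist_le_diam hne)

end

lemma dir_complex_to_path {n d : ℕ} (C : Finset (Finset (Fin n)))
    (hcard : ∀ X ∈ C, X.card = d) (hconn : (adjGraph C).Connected)
    (δ : ℕ) (hδ : (adjGraph C).diam = δ) :
    ∃ p : Fin (δ + 1) → {s : Finset (Fin n) // s.card = d},
      IsInducedPath (johnsonGraph n d) p := by
  classical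
  haveI : Nonempty {X // X ∈ C} := hconn.nonempty
  obtain ⟨u, v, huv⟩ := SimpleGraph.exists_dist_eq_diam (G := adjGraph C)
  rw [hδ] at huv
  obtain ⟨w, hw⟩ := hconn.exists_walk_length_eq_dist u v
  have hwlen : w.length = δ := by rw [hw, huv]
  set gv : ℕ → {X // X ∈ C} := w.getVert with hgv
  have hdL : ∀ k : ℕ, (adjGraph C).dist u (gv k) ≤ k := fun k => dist_getVert_le hconn w k
  have hdR : ∀ k : ℕ, (adjGraph C).dist (gv k) v ≤ δ - k := by
    intro k
    have := getVert_dist_le hconn w k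
    rwa [hwlen] at this
  have hinj : ∀ i j : ℕ, i ≤ δ → j ≤ δ → gv i = gv j → i = j := by
    intro i j hi hj hij
    by_contra hne
    wlog hlt : i < j generalizing i j
    · exact this j i hj hi hij.symm (Ne.symm hne) (by omega)
    have h3 : δ ≤ (adjGraph C).dist u (gv i) + (adjGraph C).dist (gv i) v := by
      rw [← huv]
      exact hconn.dist_triangle
    have h1 := hdL i
    have h2 := hdR j
    rw [← hij] at h2
    omega
  have key : ∀ i j : ℕ, i < j → j ≤ δ → (adjGraph C).Adj (gv i) (gv j) → i + 1 = j := by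
    intro i j hlt hj hadj
    by_contra hne
    have hij1 : (adjGraph C).dist (gv i) (gv j) = 1 := SimpleGraph.dist_eq_one_iff_adj.mpr hadj
    have h3 : δ ≤ (adjGraph C).dist u (gv i) + (adjGraph C).dist (gv i) v := by
      rw [← huv]; exact hconn.dist_triangle
    have h4 : (adjGraph C).dist (gv i) v ≤
        (adjGraph C).dist (gv i) (gv j) + (adjGraph C).dist (gv j) v := hconn.dist_triangle
    have h1 := hdL i
    have h2 := hdR j
    omega
  refine ⟨fun i => ⟨(gv i.1).1, hcard _ (gv i.1).2⟩, ?_, ?_⟩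
  · intro i j hij
    have h2 := congrArg Subtype.val hij
    exact Fin.ext (hinj i.1 j.1 (by omega) (by omega) (Subtype.ext h2))
  · intro i j
    constructor
    · intro hadj
      have hadj' : (adjGraph C).Adj (gv i.1) (gv j.1) := hadj
      rcases lt_trichotomy (i:ℕ) (j:ℕ) with hlt | heq | hgt
      · exact Or.inl (key i.1 j.1 hlt (by omega) hadj')
      · exfalso
        rw [show (i:ℕ) = (j:ℕ) from heq] at hadj'
        exact (adjGraph C).irrefl hadj'
      · exact Or.inr (key j.1 i.1 hgt (by omega) hadj'.symm)
    · intro hcons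
      rcases hcons with h | h
      · have hlt : (i:ℕ) < w.length := by omega
        have hadj := w.adj_getVert_succ hlt
        rw [show (i:ℕ) + 1 = (j:ℕ) from h] at hadj
        exact hadj
      · have hlt : (j:ℕ) < w.length := by omega
        have hadj := w.adj_getVert_succ hlt
        rw [show (j:ℕ) + 1 = (i:ℕ) from h] at hadj
        exact hadj.symm

/-- The maximum diameter of the dual (adjacency) graph among all strongly connected
pure `(d-1)`-dimensional simplicial complexes on `n` vertices equals the length of
the longest induced path in the Johnson graph `J(n,d)`. -/

theorem Hs_eq_longest_induced_path_johnson (n d : ℕ) :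
    Hs n d = sSup {N | ∃ p : Fin (N + 1) → {s : Finset (Fin n) // s.card = d},
      IsInducedPath (johnsonGraph n d) p} := by
  unfold Hs
  congr 1
  ext N
  simp only [Set.mem_setOf_eq]
  constructor
  · rintro ⟨C, hcard, hconn, hdiam⟩
    exact dir_complex_to_path C hcard hconn N hdiam
  · rintro ⟨p, hp⟩
    exact dir_path_to_complex n d p hp
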